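/- Monotonicity of the difference quotients of the supremum functional: Let T be a nonempty set and let Φ, Ψ : T → ℝ be bounded functions. Then for all real numbers 0 < s ≤ t, sup_{x ∈ T}(t·Φ(x) + Ψ(x)) − t·sup_{x ∈ T} Φ(x) ≤ sup_{x ∈ T}(s·Φ(x) + Ψ(x)) − s·sup_{x ∈ T} Φ(x). In other words, the map s ↦ sup_T(s·Φ + Ψ) − s·sup_T Φ is non-increasing on (0,∞). -/
import Mathlib

/-- Monotonicity of the difference quotients of the supremum functional. -/
theorem sup_difference_quotient_antitone {T : Type*} [Nonempty T]
    (Φ Ψ : T → ℝ)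
    (hΦ : ∃ M : ℝ, ∀ x, |Φ x| ≤ M) (hΨ : ∃ M : ℝ, ∀ x, |Ψ x| ≤ M)
    (s t : ℝ) (hs : 0 < s) (hst : s ≤ t) :
    (⨆ x, (t * Φ x + Ψ x)) - t * (⨆ x, Φ x) ≤
      (⨆ x, (s * Φ x + Ψ x)) - s * (⨆ x, Φ x) := by
  obtain ⟨M, hM⟩ := hΦ
  obtain ⟨N, hN⟩ := hΨ
  have hbΦ : BddAbove (Set.range Φ) :=
    ⟨M, by rintro _ ⟨x, rfl⟩; exact (abs_le.mp (hM x)).2⟩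
  have hbS : BddAbove (Set.range fun x => s * Φ x + Ψ x) := by
    refine ⟨|s| * M + N, ?_⟩
    rintro _ ⟨x, rfl⟩
    show s * Φ x + Ψ x ≤ |s| * M + N
    have h1 : s * Φ x ≤ |s| * M := by
      calc s * Φ x ≤ |s * Φ x| := le_abs_self _
        _ = |s| * |Φ x| := abs_mul _ _
        _ ≤ |s| * M := by
            exact mul_le_mul_of_nonneg_left (hM x) (abs_nonneg s)
    linarith [(abs_le.mp (hN x)).2]
  have key : ∀ x, t * Φ x + Ψ x - t * (⨆ x, Φ x) ≤
      (⨆ x, (s * Φ x + Ψ x)) - s * (⨆ x, Φ x) := by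
    intro x
    have h1 : Φ x ≤ ⨆ x, Φ x := le_ciSup hbΦ x
    have h2 : s * Φ x + Ψ x ≤ ⨆ x, (s * Φ x + Ψ x) := le_ciSup hbS x
    nlinarith
  have := ciSup_le (fun x => by linarith [key x] :
    ∀ x, t * Φ x + Ψ x ≤ (⨆ x, (s * Φ x + Ψ x)) - s * (⨆ x, Φ x) + t * (⨆ x, Φ x))
  linarith
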